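/- Let 1 < p ≤ 2 and let φ: (0,∞)×ℝⁿ → ℂ satisfy φ, ∂_tφ ∈ T^p. Then for every t > 0, ‖φ(t,·)‖_{L^p(ℝⁿ)}^p ≲ t^{-p/2} ‖φ‖_{T^p}^p + t^{p/2} ‖∂_tφ‖_{T^p}^p, with implicit constant depending only on p and n. -/

import Mathlib

open MeasureTheory Set ENNReal

/-- The conical (tent space) square function norm `‖g‖_{T^p}`. -/
noncomputable def Tnorm (n : ℕ) (p : ℝ)
    (g : ℝ → EuclideanSpace ℝ (Fin n) → ℝ≥0∞) : ℝ≥0∞ :=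
  (∫⁻ x, (∫⁻ t in Ioi (0 : ℝ),
      (volume (Metric.ball x (Real.sqrt t)))⁻¹ *
        ∫⁻ y in Metric.ball x (Real.sqrt t), (g t y) ^ 2) ^ (p / 2)) ^ (1 / p)

section AuxSTMT4

open Metric

lemma sq_add_le_stmt4 (a b : ℝ≥0∞) : (a + b) ^ 2 ≤ 4 * a ^ 2 + 4 * b ^ 2 := by
  have h1 : a + b ≤ 2 * (a ⊔ b) := by
    rw [two_mul]; exact add_le_add le_sup_left le_sup_right
  have h2 : (a ⊔ b) ^ 2 ≤ a ^ 2 + b ^ 2 := by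
    rcases le_total a b with h | h
    · simp [sup_eq_right.2 h]
    · simp [sup_eq_left.2 h]
  calc (a + b) ^ 2 ≤ (2 * (a ⊔ b)) ^ 2 := pow_le_pow_left₀ zero_le h1 2
    _ = 4 * (a ⊔ b) ^ 2 := by ring
    _ ≤ 4 * (a ^ 2 + b ^ 2) := mul_le_mul_right h2 4
    _ = 4 * a ^ 2 + 4 * b ^ 2 := by ring

lemma rpow_half_sq_stmt4 (x y : ℝ≥0∞) : (x ^ (1/(2:ℝ)) * y ^ (1/(2:ℝ))) ^ 2 = x * y := by
  rw [mul_pow, ← ENNReal.rpow_natCast (x ^ (1/(2:ℝ))) 2,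
    ← ENNReal.rpow_natCast (y ^ (1/(2:ℝ))) 2, ← ENNReal.rpow_mul, ← ENNReal.rpow_mul]
  push_cast
  norm_num

lemma jensen_avg_stmt4 {α : Type*} [MeasurableSpace α] (μ : Measure α) (f : α → ℝ≥0∞)
    (hf : AEMeasurable f μ) {θ : ℝ} (hθ0 : 0 < θ) (hθ1 : θ ≤ 1)
    (h0 : μ univ ≠ 0) (htop : μ univ ≠ ⊤) :
    (μ univ)⁻¹ * ∫⁻ a, f a ^ θ ∂μ ≤ ((μ univ)⁻¹ * ∫⁻ a, f a ∂μ) ^ θ := by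
  rcases eq_or_lt_of_le hθ1 with rfl | hθlt
  · simp
  have key : ∫⁻ a, f a ^ θ ∂μ ≤ (∫⁻ a, f a ∂μ) ^ θ * (μ univ) ^ (1 - θ) := by
    have hpq : (1/θ).HolderConjugate (1/(1-θ)) := by
      rw [Real.holderConjugate_iff]
      constructor
      · rw [lt_div_iff₀ hθ0]; linarith
      · rw [one_div, one_div, inv_inv, inv_inv]; ring
    have h := ENNReal.lintegral_mul_le_Lp_mul_Lq μ hpq
      (f := fun a => f a ^ θ) (g := fun _ => 1)
      (hf.pow aemeasurable_const) aemeasurable_const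
    simp only [Pi.mul_apply, mul_one, one_rpow, lintegral_const, one_mul] at h
    have h1 : ∀ a, (f a ^ θ) ^ (1/θ) = f a := by
      intro a
      rw [← ENNReal.rpow_mul, mul_one_div, div_self (ne_of_gt hθ0), ENNReal.rpow_one]
    simp only [h1] at h
    have h2 : (1 : ℝ) / (1/θ) = θ := by field_simp
    have h3 : (1 : ℝ) / (1/(1-θ)) = 1 - θ := by field_simp
    rwa [h2, h3] at h
  calc (μ univ)⁻¹ * ∫⁻ a, f a ^ θ ∂μ
      ≤ (μ univ)⁻¹ * ((∫⁻ a, f a ∂μ) ^ θ * (μ univ) ^ (1 - θ)) := mul_le_mul_right key _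
    _ = (∫⁻ a, f a ∂μ) ^ θ * ((μ univ)⁻¹ * (μ univ) ^ (1 - θ)) := by ring
    _ = (∫⁻ a, f a ∂μ) ^ θ * ((μ univ)⁻¹) ^ θ := by
        congr 1
        rw [← ENNReal.rpow_neg_one (μ univ), ← ENNReal.rpow_add _ _ h0 htop,
          ← ENNReal.rpow_mul]
        congr 1; ring
    _ = ((μ univ)⁻¹ * ∫⁻ a, f a ∂μ) ^ θ := by
        rw [ENNReal.mul_rpow_of_nonneg _ _ hθ0.le, mul_comm]

lemma lintegral_sq_le_stmt4 {α : Type*} [MeasurableSpace α] (μ : Measure α) (f : α → ℝ≥0∞)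
    (hf : AEMeasurable f μ) :
    (∫⁻ a, f a ∂μ) ^ 2 ≤ μ univ * ∫⁻ a, (f a) ^ 2 ∂μ := by
  have hpq : (2:ℝ).HolderConjugate 2 := by constructor <;> norm_num
  have h := ENNReal.lintegral_mul_le_Lp_mul_Lq μ hpq (f := f) (g := fun _ => 1)
    hf aemeasurable_const
  simp only [Pi.mul_apply, mul_one, one_rpow, lintegral_const, one_mul] at h
  calc (∫⁻ a, f a ∂μ) ^ 2
      ≤ ((∫⁻ a, f a ^ (2:ℝ) ∂μ) ^ (1/(2:ℝ)) * (μ univ) ^ (1/(2:ℝ))) ^ 2 :=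
        pow_le_pow_left₀ zero_le h 2
    _ = (∫⁻ a, f a ^ (2:ℝ) ∂μ) * μ univ := rpow_half_sq_stmt4 _ _
    _ = μ univ * ∫⁻ a, f a ^ 2 ∂μ := by
        rw [mul_comm]
        congr 1
        refine lintegral_congr fun a => ?_
        rw [← ENNReal.rpow_natCast (f a) 2]
        norm_num

lemma avg_ball_lintegral_stmt4 {n : ℕ} (f : EuclideanSpace ℝ (Fin n) → ℝ≥0∞)
    (hf : Measurable f) {r : ℝ} (hr : 0 < r) :
    ∫⁻ y, f y = ∫⁻ x, (volume (ball x r))⁻¹ * ∫⁻ y in ball x r, f y := by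
  set c : ℝ≥0∞ := volume (ball (0 : EuclideanSpace ℝ (Fin n)) r) with hc
  have hcx : ∀ x : EuclideanSpace ℝ (Fin n), volume (ball x r) = c :=
    fun x => Measure.addHaar_ball_center volume x r
  have hc0 : c ≠ 0 := (measure_ball_pos volume _ hr).ne'
  have hctop : c ≠ ⊤ := measure_ball_lt_top.ne
  have hker : Measurable fun z : EuclideanSpace ℝ (Fin n) × EuclideanSpace ℝ (Fin n) =>
      Set.indicator {z : EuclideanSpace ℝ (Fin n) × EuclideanSpace ℝ (Fin n) |
        dist z.2 z.1 < r} (fun z => f z.2) z := by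
    refine Measurable.indicator (hf.comp measurable_snd) ?_
    exact measurableSet_lt (continuous_snd.dist continuous_fst).measurable measurable_const
  calc ∫⁻ y, f y
      = ∫⁻ y, c⁻¹ * (f y * c) := by
        refine lintegral_congr fun y => ?_
        rw [mul_comm (f y) c, ← mul_assoc, ENNReal.inv_mul_cancel hc0 hctop, one_mul]
    _ = c⁻¹ * ∫⁻ y, f y * c := lintegral_const_mul' _ _ (ENNReal.inv_ne_top.2 hc0)
    _ = c⁻¹ * ∫⁻ y, ∫⁻ x, Set.indicator {z : EuclideanSpace ℝ (Fin n) ×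
          EuclideanSpace ℝ (Fin n) | dist z.2 z.1 < r} (fun z => f z.2) (x, y) := by
        congr 1
        refine lintegral_congr fun y => ?_
        have : ∀ x, Set.indicator {z : EuclideanSpace ℝ (Fin n) ×
            EuclideanSpace ℝ (Fin n) | dist z.2 z.1 < r} (fun z => f z.2) (x, y)
            = Set.indicator (ball y r) (fun _ => f y) x := by
          intro x
          by_cases hxy : dist x y < r
          · rw [Set.indicator_of_mem (by simpa [dist_comm] using hxy),
              Set.indicator_of_mem (by simpa [mem_ball] using hxy)]
          · rw [Set.indicator_of_notMem (by simpa [dist_comm] using hxy),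
              Set.indicator_of_notMem (by simpa [mem_ball] using hxy)]
        simp only [this]
        rw [lintegral_indicator_const measurableSet_ball, hcx y]
    _ = c⁻¹ * ∫⁻ x, ∫⁻ y, Set.indicator {z : EuclideanSpace ℝ (Fin n) ×
          EuclideanSpace ℝ (Fin n) | dist z.2 z.1 < r} (fun z => f z.2) (x, y) := by
        congr 1
        exact (lintegral_lintegral_swap hker.aemeasurable).symm
    _ = c⁻¹ * ∫⁻ x, ∫⁻ y in ball x r, f y := by
        congr 1
        refine lintegral_congr fun x => ?_
        rw [← lintegral_indicator measurableSet_ball]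
        refine lintegral_congr fun y => ?_
        by_cases hxy : y ∈ ball x r
        · rw [Set.indicator_of_mem (by simpa [mem_ball] using hxy),
            Set.indicator_of_mem hxy]
        · rw [Set.indicator_of_notMem (by simpa [mem_ball] using hxy),
            Set.indicator_of_notMem hxy]
    _ = ∫⁻ x, (volume (ball x r))⁻¹ * ∫⁻ y in ball x r, f y := by
        rw [← lintegral_const_mul' _ _ (ENNReal.inv_ne_top.2 hc0)]
        refine lintegral_congr fun x => ?_
        rw [hcx x]

lemma ball_vol_compare_stmt4 {n : ℕ} (x : EuclideanSpace ℝ (Fin n)) {r R : ℝ}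
    (hr : 0 < r) (hrR : r ≤ R) (hR2 : R ≤ 2 * r) :
    (volume (ball x r))⁻¹ ≤ 2 ^ n * (volume (ball x R))⁻¹ := by
  have hR : 0 < R := hr.trans_le hrR
  have hvr := Measure.addHaar_ball_of_pos (volume) x hr
  have hvR := Measure.addHaar_ball_of_pos (volume) x hR
  rw [finrank_euclideanSpace_fin] at hvr hvR
  have key : volume (ball x R) ≤ 2 ^ n * volume (ball x r) := by
    rw [hvr, hvR, ← mul_assoc]
    refine mul_le_mul_left ?_ _
    calc ENNReal.ofReal (R ^ n) ≤ ENNReal.ofReal ((2 * r) ^ n) :=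
          ENNReal.ofReal_le_ofReal (pow_le_pow_left₀ hR.le hR2 n)
      _ = 2 ^ n * ENNReal.ofReal (r ^ n) := by
          rw [mul_pow, ENNReal.ofReal_mul (by positivity), ENNReal.ofReal_pow (by norm_num)]
          norm_num
  have h2n0 : (2 : ℝ≥0∞) ^ n ≠ 0 := by positivity
  have h2nt : (2 : ℝ≥0∞) ^ n ≠ ⊤ := (ENNReal.pow_lt_top (by norm_num)).ne
  have hinv : ((2:ℝ≥0∞) ^ n * volume (ball x r))⁻¹ ≤ (volume (ball x R))⁻¹ :=
    ENNReal.inv_le_inv' key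
  calc (volume (ball x r))⁻¹
      = 2 ^ n * ((2:ℝ≥0∞) ^ n * volume (ball x r))⁻¹ := by
        rw [ENNReal.mul_inv (Or.inl h2n0) (Or.inl h2nt), ← mul_assoc,
          ENNReal.mul_inv_cancel h2n0 h2nt, one_mul]
    _ ≤ 2 ^ n * (volume (ball x R))⁻¹ := mul_le_mul_right hinv _

lemma avg_ball_mono_stmt4 {n : ℕ} (g : EuclideanSpace ℝ (Fin n) → ℝ≥0∞)
    (x : EuclideanSpace ℝ (Fin n)) {r R : ℝ} (hr : 0 < r) (hrR : r ≤ R) (hR2 : R ≤ 2 * r) :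
    (volume (ball x r))⁻¹ * ∫⁻ y in ball x r, g y
      ≤ 2 ^ n * ((volume (ball x R))⁻¹ * ∫⁻ y in ball x R, g y) := by
  rw [← mul_assoc]
  exact mul_le_mul' (ball_vol_compare_stmt4 x hr hrR hR2)
    (lintegral_mono_set (ball_subset_ball hrR))

lemma measurable_G_stmt4 {n : ℕ} (φ : ℝ → EuclideanSpace ℝ (Fin n) → ℂ)
    (hφm : Measurable (Function.uncurry φ)) :
    Measurable (fun x : EuclideanSpace ℝ (Fin n) => ∫⁻ τ in Set.Ioi (0:ℝ),
      (volume (ball x (Real.sqrt τ)))⁻¹ *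
        ∫⁻ y in ball x (Real.sqrt τ), (‖φ τ y‖₊ : ℝ≥0∞) ^ 2) := by
  have hw : Measurable fun τ : ℝ => (volume (ball (0 : EuclideanSpace ℝ (Fin n))
      (Real.sqrt τ)))⁻¹ := by
    have hmono : Monotone fun τ : ℝ => volume (ball (0 : EuclideanSpace ℝ (Fin n))
        (Real.sqrt τ)) := fun a b hab =>
      measure_mono (ball_subset_ball (Real.sqrt_le_sqrt hab))
    exact (Antitone.measurable (fun a b hab => ENNReal.inv_le_inv' (hmono hab)))
  have hGker : Measurable fun z : (EuclideanSpace ℝ (Fin n) × ℝ) × EuclideanSpace ℝ (Fin n) =>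
      Set.indicator {z : (EuclideanSpace ℝ (Fin n) × ℝ) × EuclideanSpace ℝ (Fin n) |
        dist z.2 z.1.1 < Real.sqrt z.1.2} (fun z => (‖φ z.1.2 z.2‖₊ : ℝ≥0∞) ^ 2) z := by
    refine Measurable.indicator ?_ ?_
    · exact ((hφm.comp ((measurable_snd.comp measurable_fst).prodMk
        measurable_snd)).enorm).pow_const 2
    · refine measurableSet_lt ?_ ?_
      · exact (continuous_snd.dist (continuous_fst.fst)).measurable
      · exact (Real.continuous_sqrt.comp continuous_fst.snd).measurable
  have hJ : Measurable fun q : EuclideanSpace ℝ (Fin n) × ℝ =>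
      ∫⁻ y, Set.indicator {z : (EuclideanSpace ℝ (Fin n) × ℝ) × EuclideanSpace ℝ (Fin n) |
        dist z.2 z.1.1 < Real.sqrt z.1.2} (fun z => (‖φ z.1.2 z.2‖₊ : ℝ≥0∞) ^ 2) (q, y) :=
    hGker.lintegral_prod_right'
  have hF : Measurable fun q : EuclideanSpace ℝ (Fin n) × ℝ =>
      (volume (ball q.1 (Real.sqrt q.2)))⁻¹ *
        ∫⁻ y in ball q.1 (Real.sqrt q.2), (‖φ q.2 y‖₊ : ℝ≥0∞) ^ 2 := by
    have heq : (fun q : EuclideanSpace ℝ (Fin n) × ℝ =>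
        (volume (ball q.1 (Real.sqrt q.2)))⁻¹ *
          ∫⁻ y in ball q.1 (Real.sqrt q.2), (‖φ q.2 y‖₊ : ℝ≥0∞) ^ 2)
        = fun q : EuclideanSpace ℝ (Fin n) × ℝ =>
          (volume (ball (0 : EuclideanSpace ℝ (Fin n)) (Real.sqrt q.2)))⁻¹ *
            ∫⁻ y, Set.indicator {z : (EuclideanSpace ℝ (Fin n) × ℝ) × EuclideanSpace ℝ (Fin n) |
              dist z.2 z.1.1 < Real.sqrt z.1.2}
              (fun z => (‖φ z.1.2 z.2‖₊ : ℝ≥0∞) ^ 2) (q, y) := by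
      funext q
      rw [Measure.addHaar_ball_center]
      congr 1
      rw [← lintegral_indicator measurableSet_ball]
      refine lintegral_congr fun y => ?_
      by_cases hxy : y ∈ ball q.1 (Real.sqrt q.2)
      · rw [Set.indicator_of_mem hxy, Set.indicator_of_mem (by simpa [mem_ball] using hxy)]
      · rw [Set.indicator_of_notMem hxy,
          Set.indicator_of_notMem (by simpa [mem_ball] using hxy)]
    rw [heq]
    exact (hw.comp measurable_snd).mul hJ
  exact hF.lintegral_prod_right'

lemma pointwise_bound_stmt4 {n : ℕ} (φ ψ : ℝ → EuclideanSpace ℝ (Fin n) → ℂ)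
    (hφm : Measurable (Function.uncurry φ)) (hψm : Measurable (Function.uncurry ψ))
    (hftc : ∀ x (τ t : ℝ), 0 < τ → τ ≤ t → φ t x - φ τ x = ∫ s in τ..t, ψ s x)
    {t : ℝ} (ht : 0 < t) (y : EuclideanSpace ℝ (Fin n)) :
    (‖φ t y‖₊ : ℝ≥0∞) ^ 2
      ≤ 4 * (ENNReal.ofReal (t/4))⁻¹ * (∫⁻ τ in Ioc (t/4) (t/2), (‖φ τ y‖₊ : ℝ≥0∞) ^ 2)
        + 4 * ENNReal.ofReal t * (∫⁻ s in Ioc (t/4) t, (‖ψ s y‖₊ : ℝ≥0∞) ^ 2) := by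
  have hψy : Measurable fun s => ψ s y := hψm.comp measurable_prodMk_right
  set I : ℝ≥0∞ := ∫⁻ s in Ioc (t/4) t, (‖ψ s y‖₊ : ℝ≥0∞) with hI
  set Fφ : ℝ≥0∞ := ∫⁻ τ in Ioc (t/4) (t/2), (‖φ τ y‖₊ : ℝ≥0∞) ^ 2 with hFφ
  set Fψ : ℝ≥0∞ := ∫⁻ s in Ioc (t/4) t, (‖ψ s y‖₊ : ℝ≥0∞) ^ 2 with hFψ
  have ht4 : (0:ℝ) < t/4 := by linarith
  have h1 : ∀ τ ∈ Ioc (t/4) (t/2), (‖φ t y‖₊ : ℝ≥0∞) ≤ (‖φ τ y‖₊ : ℝ≥0∞) + I := by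
    intro τ hτ
    have hτ0 : 0 < τ := ht4.trans hτ.1
    have hτt : τ ≤ t := hτ.2.trans (by linarith)
    have heq : φ t y = φ τ y + ∫ s in τ..t, ψ s y := by
      have h := hftc y τ t hτ0 hτt
      linear_combination h
    have hbound : (‖∫ s in τ..t, ψ s y‖₊ : ℝ≥0∞) ≤ I := by
      rw [intervalIntegral.integral_of_le hτt]
      calc (‖∫ s in Ioc τ t, ψ s y‖₊ : ℝ≥0∞)
          ≤ ∫⁻ s in Ioc τ t, (‖ψ s y‖₊ : ℝ≥0∞) := enorm_integral_le_lintegral_enorm _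
        _ ≤ I := lintegral_mono_set (Ioc_subset_Ioc_left hτ.1.le)
    calc (‖φ t y‖₊ : ℝ≥0∞) = ‖φ τ y + ∫ s in τ..t, ψ s y‖₊ := by rw [heq]
      _ ≤ (‖φ τ y‖₊ : ℝ≥0∞) + ‖∫ s in τ..t, ψ s y‖₊ := by
          exact_mod_cast nnnorm_add_le _ _
      _ ≤ (‖φ τ y‖₊ : ℝ≥0∞) + I := add_le_add_right hbound _
  have h2 : ∀ τ ∈ Ioc (t/4) (t/2),
      (‖φ t y‖₊ : ℝ≥0∞) ^ 2 ≤ 4 * (‖φ τ y‖₊ : ℝ≥0∞) ^ 2 + 4 * I ^ 2 := fun τ hτ =>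
    (pow_le_pow_left₀ zero_le (h1 τ hτ) 2).trans (sq_add_le_stmt4 _ _)
  have hvol : volume (Ioc (t/4) (t/2)) = ENNReal.ofReal (t/4) := by
    rw [Real.volume_Ioc]
    congr 1
    ring
  have h3 : ENNReal.ofReal (t/4) * (‖φ t y‖₊ : ℝ≥0∞) ^ 2
      ≤ 4 * Fφ + ENNReal.ofReal (t/4) * (4 * I ^ 2) := by
    have hmono : ∫⁻ τ in Ioc (t/4) (t/2), (‖φ t y‖₊ : ℝ≥0∞) ^ 2
        ≤ ∫⁻ τ in Ioc (t/4) (t/2), (4 * (‖φ τ y‖₊ : ℝ≥0∞) ^ 2 + 4 * I ^ 2) := by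
      refine lintegral_mono_ae ?_
      filter_upwards [ae_restrict_mem measurableSet_Ioc] with τ hτ using h2 τ hτ
    have hsplit : ∫⁻ τ in Ioc (t/4) (t/2), (4 * (‖φ τ y‖₊ : ℝ≥0∞) ^ 2 + 4 * I ^ 2)
        = 4 * Fφ + ENNReal.ofReal (t/4) * (4 * I ^ 2) := by
      rw [lintegral_add_right _ measurable_const, lintegral_const_mul' _ _ (by norm_num),
        setLIntegral_const, hvol, mul_comm (4 * I ^ 2)]
    calc ENNReal.ofReal (t/4) * (‖φ t y‖₊ : ℝ≥0∞) ^ 2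
        = ∫⁻ _ in Ioc (t/4) (t/2), (‖φ t y‖₊ : ℝ≥0∞) ^ 2 := by
          rw [setLIntegral_const, hvol, mul_comm]
      _ ≤ _ := hmono.trans_eq hsplit
  have h4 : I ^ 2 ≤ ENNReal.ofReal t * Fψ := by
    have hcs := lintegral_sq_le_stmt4 (volume.restrict (Ioc (t/4) t))
      (fun s => (‖ψ s y‖₊ : ℝ≥0∞)) hψy.enorm.aemeasurable
    rw [Measure.restrict_apply_univ, Real.volume_Ioc] at hcs
    exact hcs.trans (mul_le_mul_left (ENNReal.ofReal_le_ofReal (by linarith)) _)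
  have hc0 : ENNReal.ofReal (t/4) ≠ 0 := (ENNReal.ofReal_pos.2 ht4).ne'
  have hct : ENNReal.ofReal (t/4) ≠ ⊤ := ENNReal.ofReal_ne_top
  calc (‖φ t y‖₊ : ℝ≥0∞) ^ 2
      = (ENNReal.ofReal (t/4))⁻¹ * (ENNReal.ofReal (t/4) * (‖φ t y‖₊ : ℝ≥0∞) ^ 2) := by
        rw [← mul_assoc, ENNReal.inv_mul_cancel hc0 hct, one_mul]
    _ ≤ (ENNReal.ofReal (t/4))⁻¹ * (4 * Fφ + ENNReal.ofReal (t/4) * (4 * I ^ 2)) :=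
        mul_le_mul_right h3 _
    _ = 4 * (ENNReal.ofReal (t/4))⁻¹ * Fφ + 4 * I ^ 2 := by
        rw [mul_add]
        congr 1
        · ring
        · rw [← mul_assoc, ENNReal.inv_mul_cancel hc0 hct, one_mul]
    _ ≤ 4 * (ENNReal.ofReal (t/4))⁻¹ * Fφ + 4 * (ENNReal.ofReal t * Fψ) :=
        add_le_add_right (mul_le_mul_right h4 4) _
    _ = 4 * (ENNReal.ofReal (t/4))⁻¹ * Fφ + 4 * ENNReal.ofReal t * Fψ := by ring

lemma rpow_split_stmt4 (K u v : ℝ≥0∞) (hK : 1 ≤ K) {θ : ℝ} (hθ0 : 0 ≤ θ) (hθ1 : θ ≤ 1) :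
    (K * (u + v)) ^ θ ≤ K * (u ^ θ + v ^ θ) := by
  rw [ENNReal.mul_rpow_of_nonneg _ _ hθ0]
  refine mul_le_mul' ?_ (ENNReal.rpow_add_le_add_rpow u v hθ0 hθ1)
  calc K ^ θ ≤ K ^ (1:ℝ) := ENNReal.rpow_le_rpow_of_exponent_le hK hθ1
    _ = K := ENNReal.rpow_one K

end AuxSTMT4

/-- for `1 < p ≤ 2` and `φ, ∂_tφ ∈ T^p`, one has for every `t > 0`
`‖φ(t,·)‖_{L^p}^p ≤ C (t^{-p/2} ‖φ‖_{T^p}^p + t^{p/2} ‖∂_tφ‖_{T^p}^p)`,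
with `C` depending only on `p` and `n`. -/
theorem stmt4 (n : ℕ) (p : ℝ) (hp : 1 < p) (hp2 : p ≤ 2) :
    ∃ C : ℝ≥0∞, 0 < C ∧ C < ⊤ ∧
      ∀ (φ ψ : ℝ → EuclideanSpace ℝ (Fin n) → ℂ),
        Measurable (Function.uncurry φ) → Measurable (Function.uncurry ψ) →
        (∀ x (τ t : ℝ), 0 < τ → τ ≤ t →
          φ t x - φ τ x = ∫ s in τ..t, ψ s x) →
        Tnorm n p (fun t x => (‖φ t x‖₊ : ℝ≥0∞)) < ⊤ →
        Tnorm n p (fun t x => (‖ψ t x‖₊ : ℝ≥0∞)) < ⊤ →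
        ∀ t : ℝ, 0 < t →
          eLpNorm (φ t) (ENNReal.ofReal p) volume ^ p
            ≤ C * (ENNReal.ofReal t ^ (-(p / 2)) *
                    Tnorm n p (fun s x => (‖φ s x‖₊ : ℝ≥0∞)) ^ p
                 + ENNReal.ofReal t ^ (p / 2) *
                    Tnorm n p (fun s x => (‖ψ s x‖₊ : ℝ≥0∞)) ^ p) := by
  have hp0 : (0:ℝ) < p := lt_trans one_pos hp
  have hθ0 : (0:ℝ) < p/2 := by linarith
  have hθ1 : p/2 ≤ 1 := by linarith
  refine ⟨2 ^ (n + 4), ?_, ?_, ?_⟩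
  · positivity
  · exact ENNReal.pow_lt_top (by norm_num)
  intro φ ψ hφm hψm hftc _ _ t ht
  set Gφ : EuclideanSpace ℝ (Fin n) → ℝ≥0∞ := fun x => ∫⁻ τ in Ioi (0:ℝ),
      (volume (Metric.ball x (Real.sqrt τ)))⁻¹ *
        ∫⁻ y in Metric.ball x (Real.sqrt τ), (‖φ τ y‖₊ : ℝ≥0∞) ^ 2 with hGφdef
  set Gψ : EuclideanSpace ℝ (Fin n) → ℝ≥0∞ := fun x => ∫⁻ τ in Ioi (0:ℝ),
      (volume (Metric.ball x (Real.sqrt τ)))⁻¹ *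
        ∫⁻ y in Metric.ball x (Real.sqrt τ), (‖ψ τ y‖₊ : ℝ≥0∞) ^ 2 with hGψdef
  have hTφ : Tnorm n p (fun s x => (‖φ s x‖₊ : ℝ≥0∞)) ^ p = ∫⁻ x, Gφ x ^ (p/2) := by
    unfold Tnorm
    rw [← ENNReal.rpow_mul, one_div, inv_mul_cancel₀ (ne_of_gt hp0), ENNReal.rpow_one]
  have hTψ : Tnorm n p (fun s x => (‖ψ s x‖₊ : ℝ≥0∞)) ^ p = ∫⁻ x, Gψ x ^ (p/2) := by
    unfold Tnorm
    rw [← ENNReal.rpow_mul, one_div, inv_mul_cancel₀ (ne_of_gt hp0), ENNReal.rpow_one]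
  have hφt : Measurable (φ t) := hφm.comp measurable_prodMk_left
  -- radius
  set r : ℝ := Real.sqrt t / 2 with hrdef
  have hr : 0 < r := by
    have := Real.sqrt_pos.2 ht
    positivity
  have hrsq : r ^ 2 = t / 4 := by
    rw [hrdef, div_pow, Real.sq_sqrt ht.le]
    norm_num
  have h2r : 2 * r = Real.sqrt t := by rw [hrdef]; ring
  -- eLpNorm
  have hpne : (ENNReal.ofReal p) ≠ 0 := by
    simp only [ne_eq, ENNReal.ofReal_eq_zero, not_le]
    exact hp0
  have heq : eLpNorm (φ t) (ENNReal.ofReal p) volume ^ p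
      = ∫⁻ y, (‖φ t y‖₊ : ℝ≥0∞) ^ p := by
    rw [eLpNorm_eq_lintegral_rpow_enorm_toReal hpne ENNReal.ofReal_ne_top,
      ENNReal.toReal_ofReal hp0.le, ← ENNReal.rpow_mul, one_div,
      inv_mul_cancel₀ (ne_of_gt hp0), ENNReal.rpow_one]
    rfl
  have havg := avg_ball_lintegral_stmt4 (fun y => (‖φ t y‖₊ : ℝ≥0∞) ^ p)
    (hφt.enorm.pow measurable_const) hr
  -- pointwise-in-x estimate
  have hperx : ∀ x : EuclideanSpace ℝ (Fin n),
      (volume (Metric.ball x r))⁻¹ * ∫⁻ y in Metric.ball x r, (‖φ t y‖₊ : ℝ≥0∞) ^ p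
        ≤ 2 ^ (n + 4) * (ENNReal.ofReal t ^ (-(p/2)) * Gφ x ^ (p/2)
            + ENNReal.ofReal t ^ (p/2) * Gψ x ^ (p/2)) := by
    intro x
    set c : ℝ≥0∞ := volume (Metric.ball x r) with hcdef
    have hc0 : c ≠ 0 := (Metric.measure_ball_pos volume x hr).ne'
    have hct : c ≠ ⊤ := measure_ball_lt_top.ne
    -- Jensen
    have hjen : c⁻¹ * (∫⁻ y in Metric.ball x r, (‖φ t y‖₊ : ℝ≥0∞) ^ p)
        ≤ (c⁻¹ * ∫⁻ y in Metric.ball x r, (‖φ t y‖₊ : ℝ≥0∞) ^ 2) ^ (p/2) := by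
      have hmeas : AEMeasurable (fun y => (‖φ t y‖₊ : ℝ≥0∞) ^ 2)
          (volume.restrict (Metric.ball x r)) :=
        (hφt.enorm.pow_const 2).aemeasurable
      have h := jensen_avg_stmt4 (volume.restrict (Metric.ball x r))
        (fun y => (‖φ t y‖₊ : ℝ≥0∞) ^ 2) hmeas hθ0 hθ1
        (by rw [Measure.restrict_apply_univ]; exact hc0)
        (by rw [Measure.restrict_apply_univ]; exact hct)
      rw [Measure.restrict_apply_univ] at h
      have hpt : ∀ z : ℝ≥0∞, (z ^ 2) ^ (p/2) = z ^ p := by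
        intro z
        rw [← ENNReal.rpow_natCast z 2, ← ENNReal.rpow_mul]
        congr 1
        push_cast
        ring
      simp only [hpt] at h
      exact h
    -- plug in pointwise bound
    have hplug : ∫⁻ y in Metric.ball x r, (‖φ t y‖₊ : ℝ≥0∞) ^ 2
        ≤ ∫⁻ y in Metric.ball x r,
            (4 * (ENNReal.ofReal (t/4))⁻¹ *
              (∫⁻ τ in Ioc (t/4) (t/2), (‖φ τ y‖₊ : ℝ≥0∞) ^ 2)
            + 4 * ENNReal.ofReal t *
              (∫⁻ s in Ioc (t/4) t, (‖ψ s y‖₊ : ℝ≥0∞) ^ 2)) :=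
      lintegral_mono fun y => pointwise_bound_stmt4 φ ψ hφm hψm hftc ht y
    -- measurability of inner time integrals
    have hFφm : Measurable fun y : EuclideanSpace ℝ (Fin n) =>
        ∫⁻ τ in Ioc (t/4) (t/2), (‖φ τ y‖₊ : ℝ≥0∞) ^ 2 :=
      Measurable.lintegral_prod_right'
        (f := fun q : EuclideanSpace ℝ (Fin n) × ℝ => (‖φ q.2 q.1‖₊ : ℝ≥0∞) ^ 2)
        (((hφm.comp (measurable_snd.prodMk measurable_fst)).enorm).pow_const 2)
    have hFψm : Measurable fun y : EuclideanSpace ℝ (Fin n) =>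
        ∫⁻ s in Ioc (t/4) t, (‖ψ s y‖₊ : ℝ≥0∞) ^ 2 :=
      Measurable.lintegral_prod_right'
        (f := fun q : EuclideanSpace ℝ (Fin n) × ℝ => (‖ψ q.2 q.1‖₊ : ℝ≥0∞) ^ 2)
        (((hψm.comp (measurable_snd.prodMk measurable_fst)).enorm).pow_const 2)
    have hA : 4 * (ENNReal.ofReal (t/4))⁻¹ ≠ ⊤ := by
      refine ENNReal.mul_ne_top (by norm_num) ?_
      exact ENNReal.inv_ne_top.2 (ENNReal.ofReal_pos.2 (by linarith)).ne'
    have hB : 4 * ENNReal.ofReal t ≠ ⊤ := ENNReal.mul_ne_top (by norm_num) ENNReal.ofReal_ne_top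
    have hsplit : ∫⁻ y in Metric.ball x r,
        (4 * (ENNReal.ofReal (t/4))⁻¹ *
          (∫⁻ τ in Ioc (t/4) (t/2), (‖φ τ y‖₊ : ℝ≥0∞) ^ 2)
        + 4 * ENNReal.ofReal t * (∫⁻ s in Ioc (t/4) t, (‖ψ s y‖₊ : ℝ≥0∞) ^ 2))
        = 4 * (ENNReal.ofReal (t/4))⁻¹ *
            (∫⁻ y in Metric.ball x r, ∫⁻ τ in Ioc (t/4) (t/2), (‖φ τ y‖₊ : ℝ≥0∞) ^ 2)
          + 4 * ENNReal.ofReal t *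
            (∫⁻ y in Metric.ball x r, ∫⁻ s in Ioc (t/4) t, (‖ψ s y‖₊ : ℝ≥0∞) ^ 2) := by
      rw [lintegral_add_left (hFφm.const_mul _), lintegral_const_mul' _ _ hA,
        lintegral_const_mul' _ _ hB]
    -- swap and ball comparison, φ part
    have hswapφ : ∫⁻ y in Metric.ball x r, ∫⁻ τ in Ioc (t/4) (t/2), (‖φ τ y‖₊ : ℝ≥0∞) ^ 2
        = ∫⁻ τ in Ioc (t/4) (t/2), ∫⁻ y in Metric.ball x r, (‖φ τ y‖₊ : ℝ≥0∞) ^ 2 :=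
      lintegral_lintegral_swap
        ((((hφm.comp (measurable_snd.prodMk measurable_fst)).enorm).pow_const
          2).aemeasurable)
    have hswapψ : ∫⁻ y in Metric.ball x r, ∫⁻ s in Ioc (t/4) t, (‖ψ s y‖₊ : ℝ≥0∞) ^ 2
        = ∫⁻ s in Ioc (t/4) t, ∫⁻ y in Metric.ball x r, (‖ψ s y‖₊ : ℝ≥0∞) ^ 2 :=
      lintegral_lintegral_swap
        ((((hψm.comp (measurable_snd.prodMk measurable_fst)).enorm).pow_const
          2).aemeasurable)
    have hcompφ : c⁻¹ * ∫⁻ y in Metric.ball x r,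
        ∫⁻ τ in Ioc (t/4) (t/2), (‖φ τ y‖₊ : ℝ≥0∞) ^ 2 ≤ 2 ^ n * Gφ x := by
      rw [hswapφ, ← lintegral_const_mul' _ _ (ENNReal.inv_ne_top.2 hc0)]
      calc ∫⁻ τ in Ioc (t/4) (t/2), c⁻¹ * ∫⁻ y in Metric.ball x r, (‖φ τ y‖₊ : ℝ≥0∞) ^ 2
          ≤ ∫⁻ τ in Ioc (t/4) (t/2), (2:ℝ≥0∞) ^ n * ((volume (Metric.ball x (Real.sqrt τ)))⁻¹ *
              ∫⁻ y in Metric.ball x (Real.sqrt τ), (‖φ τ y‖₊ : ℝ≥0∞) ^ 2) := by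
            refine lintegral_mono_ae ?_
            filter_upwards [ae_restrict_mem measurableSet_Ioc] with τ hτ
            refine avg_ball_mono_stmt4 _ x hr ?_ ?_
            · rw [← Real.sqrt_sq hr.le, ]
              exact Real.sqrt_le_sqrt (by rw [hrsq]; exact hτ.1.le)
            · rw [h2r]
              exact Real.sqrt_le_sqrt (hτ.2.trans (by linarith))
        _ = 2 ^ n * ∫⁻ τ in Ioc (t/4) (t/2), ((volume (Metric.ball x (Real.sqrt τ)))⁻¹ *
              ∫⁻ y in Metric.ball x (Real.sqrt τ), (‖φ τ y‖₊ : ℝ≥0∞) ^ 2) :=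
            lintegral_const_mul' _ _ (ENNReal.pow_lt_top (by norm_num)).ne
        _ ≤ 2 ^ n * Gφ x := by
            refine mul_le_mul_right ?_ _
            rw [hGφdef]
            exact lintegral_mono_set fun τ hτ => lt_trans (by linarith) hτ.1
    have hcompψ : c⁻¹ * ∫⁻ y in Metric.ball x r,
        ∫⁻ s in Ioc (t/4) t, (‖ψ s y‖₊ : ℝ≥0∞) ^ 2 ≤ 2 ^ n * Gψ x := by
      rw [hswapψ, ← lintegral_const_mul' _ _ (ENNReal.inv_ne_top.2 hc0)]
      calc ∫⁻ s in Ioc (t/4) t, c⁻¹ * ∫⁻ y in Metric.ball x r, (‖ψ s y‖₊ : ℝ≥0∞) ^ 2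
          ≤ ∫⁻ s in Ioc (t/4) t, (2:ℝ≥0∞) ^ n * ((volume (Metric.ball x (Real.sqrt s)))⁻¹ *
              ∫⁻ y in Metric.ball x (Real.sqrt s), (‖ψ s y‖₊ : ℝ≥0∞) ^ 2) := by
            refine lintegral_mono_ae ?_
            filter_upwards [ae_restrict_mem measurableSet_Ioc] with s hs
            refine avg_ball_mono_stmt4 _ x hr ?_ ?_
            · rw [← Real.sqrt_sq hr.le]
              exact Real.sqrt_le_sqrt (by rw [hrsq]; exact hs.1.le)
            · rw [h2r]
              exact Real.sqrt_le_sqrt hs.2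
        _ = 2 ^ n * ∫⁻ s in Ioc (t/4) t, ((volume (Metric.ball x (Real.sqrt s)))⁻¹ *
              ∫⁻ y in Metric.ball x (Real.sqrt s), (‖ψ s y‖₊ : ℝ≥0∞) ^ 2) :=
            lintegral_const_mul' _ _ (ENNReal.pow_lt_top (by norm_num)).ne
        _ ≤ 2 ^ n * Gψ x := by
            refine mul_le_mul_right ?_ _
            rw [hGψdef]
            exact lintegral_mono_set fun s hs => lt_trans (by linarith) hs.1
    -- coefficient juggling
    have h44 : (ENNReal.ofReal (t/4))⁻¹ = 4 * (ENNReal.ofReal t)⁻¹ := by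
      symm
      refine (ENNReal.eq_inv_of_mul_eq_one_left ?_)
      rw [show (4:ℝ≥0∞) = ENNReal.ofReal (4:ℝ) by norm_num [ENNReal.ofReal_ofNat],
        mul_right_comm, ← ENNReal.ofReal_mul (by norm_num : (0:ℝ) ≤ 4),
        show 4*(t/4) = t by ring]
      exact ENNReal.mul_inv_cancel (ENNReal.ofReal_pos.2 ht).ne' ENNReal.ofReal_ne_top
    have hpow24 : (2:ℝ≥0∞) ^ (n+4) = 2 ^ n * 16 := by
      rw [pow_add]; norm_num
    have hkey : c⁻¹ * ∫⁻ y in Metric.ball x r, (‖φ t y‖₊ : ℝ≥0∞) ^ 2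
        ≤ 2 ^ (n+4) * ((ENNReal.ofReal t)⁻¹ * Gφ x + ENNReal.ofReal t * Gψ x) := by
      calc c⁻¹ * ∫⁻ y in Metric.ball x r, (‖φ t y‖₊ : ℝ≥0∞) ^ 2
          ≤ c⁻¹ * (4 * (ENNReal.ofReal (t/4))⁻¹ *
              (∫⁻ y in Metric.ball x r, ∫⁻ τ in Ioc (t/4) (t/2), (‖φ τ y‖₊ : ℝ≥0∞) ^ 2)
            + 4 * ENNReal.ofReal t *
              (∫⁻ y in Metric.ball x r, ∫⁻ s in Ioc (t/4) t, (‖ψ s y‖₊ : ℝ≥0∞) ^ 2)) := by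
            refine mul_le_mul_right (hplug.trans_eq hsplit) _
        _ = 4 * (ENNReal.ofReal (t/4))⁻¹ * (c⁻¹ *
              ∫⁻ y in Metric.ball x r, ∫⁻ τ in Ioc (t/4) (t/2), (‖φ τ y‖₊ : ℝ≥0∞) ^ 2)
            + 4 * ENNReal.ofReal t * (c⁻¹ *
              ∫⁻ y in Metric.ball x r, ∫⁻ s in Ioc (t/4) t, (‖ψ s y‖₊ : ℝ≥0∞) ^ 2) := by
            ring
        _ ≤ 4 * (ENNReal.ofReal (t/4))⁻¹ * (2 ^ n * Gφ x)
            + 4 * ENNReal.ofReal t * (2 ^ n * Gψ x) :=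
            add_le_add (mul_le_mul_right hcompφ _) (mul_le_mul_right hcompψ _)
        _ ≤ 2 ^ (n+4) * ((ENNReal.ofReal t)⁻¹ * Gφ x + ENNReal.ofReal t * Gψ x) := by
            rw [h44, hpow24, mul_add]
            refine add_le_add ?_ ?_
            · apply le_of_eq
              ring
            · calc 4 * ENNReal.ofReal t * (2 ^ n * Gψ x)
                  = (2:ℝ≥0∞) ^ n * 4 * (ENNReal.ofReal t * Gψ x) := by ring
                _ ≤ 2 ^ n * 16 * (ENNReal.ofReal t * Gψ x) := by
                    refine mul_le_mul_left (mul_le_mul_right (by norm_num) _) _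
    -- put together with rpow
    calc c⁻¹ * ∫⁻ y in Metric.ball x r, (‖φ t y‖₊ : ℝ≥0∞) ^ p
        ≤ (c⁻¹ * ∫⁻ y in Metric.ball x r, (‖φ t y‖₊ : ℝ≥0∞) ^ 2) ^ (p/2) := hjen
      _ ≤ (2 ^ (n+4) * ((ENNReal.ofReal t)⁻¹ * Gφ x + ENNReal.ofReal t * Gψ x)) ^ (p/2) :=
          ENNReal.rpow_le_rpow hkey hθ0.le
      _ ≤ 2 ^ (n+4) * (((ENNReal.ofReal t)⁻¹ * Gφ x) ^ (p/2)
            + (ENNReal.ofReal t * Gψ x) ^ (p/2)) :=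
          rpow_split_stmt4 _ _ _ (one_le_two.trans (le_self_pow₀ (by norm_num) (by omega)))
            hθ0.le hθ1
      _ = 2 ^ (n+4) * (ENNReal.ofReal t ^ (-(p/2)) * Gφ x ^ (p/2)
            + ENNReal.ofReal t ^ (p/2) * Gψ x ^ (p/2)) := by
          rw [ENNReal.mul_rpow_of_nonneg _ _ hθ0.le, ENNReal.mul_rpow_of_nonneg _ _ hθ0.le,
            ENNReal.inv_rpow, ← ENNReal.rpow_neg]
  -- integrate over x
  have hGφm : Measurable Gφ := measurable_G_stmt4 φ hφm
  have haa : ENNReal.ofReal t ^ (-(p/2)) ≠ ⊤ := by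
    rw [ENNReal.rpow_neg]
    exact ENNReal.inv_ne_top.2 (ENNReal.rpow_pos (ENNReal.ofReal_pos.2 ht)
      ENNReal.ofReal_ne_top).ne'
  have hbb : ENNReal.ofReal t ^ (p/2) ≠ ⊤ :=
    ENNReal.rpow_ne_top_of_nonneg hθ0.le ENNReal.ofReal_ne_top
  calc eLpNorm (φ t) (ENNReal.ofReal p) volume ^ p
      = ∫⁻ y, (‖φ t y‖₊ : ℝ≥0∞) ^ p := heq
    _ = ∫⁻ x, (volume (Metric.ball x r))⁻¹ *
          ∫⁻ y in Metric.ball x r, (‖φ t y‖₊ : ℝ≥0∞) ^ p := havg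
    _ ≤ ∫⁻ x, 2 ^ (n + 4) * (ENNReal.ofReal t ^ (-(p/2)) * Gφ x ^ (p/2)
          + ENNReal.ofReal t ^ (p/2) * Gψ x ^ (p/2)) := lintegral_mono hperx
    _ = 2 ^ (n + 4) * (ENNReal.ofReal t ^ (-(p/2)) * (∫⁻ x, Gφ x ^ (p/2))
          + ENNReal.ofReal t ^ (p/2) * (∫⁻ x, Gψ x ^ (p/2))) := by
        rw [lintegral_const_mul' _ _ (ENNReal.pow_lt_top (by norm_num)).ne]
        congr 1
        rw [lintegral_add_left (((hGφm.pow measurable_const)).const_mul _),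
          lintegral_const_mul' _ _ haa, lintegral_const_mul' _ _ hbb]
    _ = 2 ^ (n + 4) * (ENNReal.ofReal t ^ (-(p / 2)) *
            Tnorm n p (fun s x => (‖φ s x‖₊ : ℝ≥0∞)) ^ p
          + ENNReal.ofReal t ^ (p / 2) *
            Tnorm n p (fun s x => (‖ψ s x‖₊ : ℝ≥0∞)) ^ p) := by
        rw [hTφ, hTψ]
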